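/- Let q ∈ ℂ with q ≠ 0 and q⁴ ≠ 1. The operator X of multiplication by x = z + z⁻¹ is the following quadratic expression in the S-Heun operators: pointwise on every f : ℂ → ℂ at every z ∈ ℂ with z ≠ 0 and q^{2k}z² ≠ 1 for k ∈ {−1,0,1}, (1/(q² − q⁻²))·[ (1 + q⁻⁴)·( q·(M₂(R₂f))(z) − (R₂(M₂f))(z) ) + 2q⁻³·( q·(M₁(R₂f))(z) − (R₂(M₁f))(z) ) ] = (z + z⁻¹)·f(z). -/

import Mathlib

noncomputable def M1op (q : ℂ) (f : ℂ → ℂ) (z : ℂ) : ℂ :=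
  ((q * z + q⁻¹ * z⁻¹) * f (q⁻¹ * z) - (q⁻¹ * z + q * z⁻¹) * f (q * z))
    / ((q - q⁻¹) * (z - z⁻¹))

noncomputable def M2op (q : ℂ) (f : ℂ → ℂ) (z : ℂ) : ℂ :=
  (z + z⁻¹) * (f (q * z) - f (q⁻¹ * z)) / ((q - q⁻¹) * (z - z⁻¹))

noncomputable def R2op (q : ℂ) (f : ℂ → ℂ) (z : ℂ) : ℂ :=
  1 / (q - q⁻¹) *
    (q ^ 2 * (z + z⁻¹) * (z * f (q⁻¹ * z) - z⁻¹ * f (q * z)) / (z - z⁻¹)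
      - (z * f (q⁻¹ * z) + z⁻¹ * f (q * z)))

/-- generic closed form for `M1op`. -/
lemma M1val (q : ℂ) (hq : q ≠ 0) (f : ℂ → ℂ) (z : ℂ) (hz : z ≠ 0)
    (hq2 : q ^ 2 - 1 ≠ 0) (hz2 : z ^ 2 - 1 ≠ 0) :
    M1op q f z = ((q ^ 2 * z ^ 2 + 1) * f (q⁻¹ * z) - (z ^ 2 + q ^ 2) * f (q * z))
      / ((q ^ 2 - 1) * (z ^ 2 - 1)) := by
  have d1 : q - q⁻¹ = (q ^ 2 - 1) / q := by field_simp
  have d4 : z - z⁻¹ = (z ^ 2 - 1) / z := by field_simp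
  simp only [M1op]
  rw [d1, d4, div_mul_div_comm, div_div_eq_mul_div,
    div_eq_div_iff (mul_ne_zero hq2 hz2) (mul_ne_zero hq2 hz2)]
  field_simp

/-- generic closed form for `M2op`. -/
lemma M2val (q : ℂ) (hq : q ≠ 0) (f : ℂ → ℂ) (z : ℂ) (hz : z ≠ 0)
    (hq2 : q ^ 2 - 1 ≠ 0) (hz2 : z ^ 2 - 1 ≠ 0) :
    M2op q f z = q * (z ^ 2 + 1) * (f (q * z) - f (q⁻¹ * z))
      / ((q ^ 2 - 1) * (z ^ 2 - 1)) := by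
  have d1 : q - q⁻¹ = (q ^ 2 - 1) / q := by field_simp
  have d4 : z - z⁻¹ = (z ^ 2 - 1) / z := by field_simp
  simp only [M2op]
  rw [d1, d4, div_mul_div_comm, div_div_eq_mul_div,
    div_eq_div_iff (mul_ne_zero hq2 hz2) (mul_ne_zero hq2 hz2)]
  field_simp

/-- generic closed form for `R2op`. -/
lemma R2val (q : ℂ) (hq : q ≠ 0) (f : ℂ → ℂ) (z : ℂ) (hz : z ≠ 0)
    (hq2 : q ^ 2 - 1 ≠ 0) (hz2 : z ^ 2 - 1 ≠ 0) :
    R2op q f z = q * (q ^ 2 * (z ^ 2 + 1) * (z ^ 2 * f (q⁻¹ * z) - f (q * z))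
        - (z ^ 2 - 1) * (z ^ 2 * f (q⁻¹ * z) + f (q * z)))
      / ((q ^ 2 - 1) * (z ^ 2 - 1) * z) := by
  have d1 : q - q⁻¹ = (q ^ 2 - 1) / q := by field_simp
  have d4 : z - z⁻¹ = (z ^ 2 - 1) / z := by field_simp
  have h4 : (z ^ 2 - 1) / z ≠ 0 := div_ne_zero hz2 hz
  simp only [R2op]
  rw [d1, d4, div_sub' h4, div_mul_div_comm, one_mul,
    div_eq_div_iff (mul_ne_zero (div_ne_zero hq2 hq) h4)
      (mul_ne_zero (mul_ne_zero hq2 hz2) hz)]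
  field_simp

set_option maxHeartbeats 4000000 in
/-- multiplication by `x = z + z⁻¹` is the quadratic expression
`(1/(q²-q⁻²))[(1+q⁻⁴)(qM₂R₂ - R₂M₂) + 2q⁻³(qM₁R₂ - R₂M₁)]` in the S-Heun
operators, pointwise. -/
theorem x_as_quadratic_in_sHeun (q : ℂ) (hq : q ≠ 0) (hq4 : q ^ 4 ≠ 1)
    (f : ℂ → ℂ) (z : ℂ) (hz : z ≠ 0)
    (h0 : z ^ 2 ≠ 1) (h1 : q ^ 2 * z ^ 2 ≠ 1) (hm1 : q⁻¹ ^ 2 * z ^ 2 ≠ 1) :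
    1 / (q ^ 2 - q⁻¹ ^ 2) *
        ((1 + q⁻¹ ^ 4) * (q * M2op q (R2op q f) z - R2op q (M2op q f) z)
          + 2 * q⁻¹ ^ 3 * (q * M1op q (R2op q f) z - R2op q (M1op q f) z))
      = (z + z⁻¹) * f z := by
  have hq2 : q ^ 2 - 1 ≠ 0 := by
    intro h; exact hq4 (by rw [show (4:ℕ) = 2*2 from rfl, pow_mul,
      show q ^ 2 = 1 by linear_combination h, one_pow])
  have hq41 : q ^ 4 - 1 ≠ 0 := sub_ne_zero.mpr hq4
  have hz2 : z ^ 2 - 1 ≠ 0 := sub_ne_zero.mpr h0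
  have hqz2 : q ^ 2 * z ^ 2 - 1 ≠ 0 := sub_ne_zero.mpr h1
  have hz2q2 : z ^ 2 - q ^ 2 ≠ 0 := by
    intro h
    exact hm1 (by rw [inv_pow, show z ^ 2 = q ^ 2 by linear_combination h,
      inv_mul_cancel₀ (pow_ne_zero 2 hq)])
  have hqz : q * z ≠ 0 := mul_ne_zero hq hz
  have hE : (q ^ 2 - 1) * (z ^ 2 - 1) ≠ 0 := mul_ne_zero hq2 hz2
  have hDG1 : (q ^ 2 - 1) * (q ^ 2 * z ^ 2 - 1) * z ≠ 0 :=
    mul_ne_zero (mul_ne_zero hq2 hqz2) hz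
  have hDG2 : (q ^ 2 - 1) * (z ^ 2 - q ^ 2) * z ≠ 0 :=
    mul_ne_zero (mul_ne_zero hq2 hz2q2) hz
  have hDA : (q ^ 2 - 1) * (q ^ 2 * z ^ 2 - 1) ≠ 0 := mul_ne_zero hq2 hqz2
  have hDB : (q ^ 2 - 1) * (z ^ 2 - q ^ 2) ≠ 0 := mul_ne_zero hq2 hz2q2
  have hD0 : (q ^ 2 - 1) ^ 2 * (z ^ 2 - 1) * (q ^ 2 * z ^ 2 - 1) * (z ^ 2 - q ^ 2) * z ≠ 0 :=
    mul_ne_zero (mul_ne_zero (mul_ne_zero (mul_ne_zero (pow_ne_zero 2 hq2) hz2) hqz2) hz2q2) hz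
  have d1 : q - q⁻¹ = (q ^ 2 - 1) / q := by field_simp
  have d2 : q * z - (q * z)⁻¹ = (q ^ 2 * z ^ 2 - 1) / (q * z) := by field_simp
  have d3 : q⁻¹ * z - (q⁻¹ * z)⁻¹ = (z ^ 2 - q ^ 2) / (q * z) := by field_simp
  have d5 : q ^ 2 - q⁻¹ ^ 2 = (q ^ 4 - 1) / q ^ 2 := by field_simp
  -- closed forms for the inner operators at q*z and q⁻¹*z
  have Hg1 : R2op q f (q * z) =
      (q ^ 2 * (q ^ 2 * z ^ 2 + 1) * (q ^ 2 * z ^ 2 * f z - f (q * (q * z)))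
        - (q ^ 2 * z ^ 2 - 1) * (q ^ 2 * z ^ 2 * f z + f (q * (q * z))))
        / ((q ^ 2 - 1) * (q ^ 2 * z ^ 2 - 1) * z) := by
    have h2 : (q ^ 2 * z ^ 2 - 1) / (q * z) ≠ 0 := div_ne_zero hqz2 hqz
    simp only [R2op, inv_mul_cancel_left₀ hq]
    rw [d1, d2, div_sub' h2, div_mul_div_comm, one_mul,
      div_eq_div_iff (mul_ne_zero (div_ne_zero hq2 hq) h2) hDG1]
    field_simp
  have Hg2 : R2op q f (q⁻¹ * z) =
      (q ^ 2 * (z ^ 2 + q ^ 2) * (z ^ 2 * f (q⁻¹ * (q⁻¹ * z)) - q ^ 2 * f z)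
        - (z ^ 2 - q ^ 2) * (z ^ 2 * f (q⁻¹ * (q⁻¹ * z)) + q ^ 2 * f z))
        / ((q ^ 2 - 1) * (z ^ 2 - q ^ 2) * z) := by
    have h3 : (z ^ 2 - q ^ 2) / (q * z) ≠ 0 := div_ne_zero hz2q2 hqz
    simp only [R2op, mul_inv_cancel_left₀ hq]
    rw [d1, d3, div_sub' h3, div_mul_div_comm, one_mul,
      div_eq_div_iff (mul_ne_zero (div_ne_zero hq2 hq) h3) hDG2]
    field_simp
  have H11 : M1op q f (q * z) =
      ((q ^ 4 * z ^ 2 + 1) * f z - (q ^ 2 * z ^ 2 + q ^ 2) * f (q * (q * z)))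
        / ((q ^ 2 - 1) * (q ^ 2 * z ^ 2 - 1)) := by
    simp only [M1op, inv_mul_cancel_left₀ hq]
    rw [d1, d2, div_mul_div_comm, div_div_eq_mul_div, div_eq_div_iff hDA hDA]
    field_simp
  have H12 : M1op q f (q⁻¹ * z) =
      (q ^ 2 * (z ^ 2 + 1) * f (q⁻¹ * (q⁻¹ * z)) - (z ^ 2 + q ^ 4) * f z)
        / ((q ^ 2 - 1) * (z ^ 2 - q ^ 2)) := by
    simp only [M1op, mul_inv_cancel_left₀ hq]
    rw [d1, d3, div_mul_div_comm, div_div_eq_mul_div, div_eq_div_iff hDB hDB]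
    field_simp
  have H21 : M2op q f (q * z) =
      q * (q ^ 2 * z ^ 2 + 1) * (f (q * (q * z)) - f z)
        / ((q ^ 2 - 1) * (q ^ 2 * z ^ 2 - 1)) := by
    simp only [M2op, inv_mul_cancel_left₀ hq]
    rw [d1, d2, div_mul_div_comm, div_div_eq_mul_div, div_eq_div_iff hDA hDA]
    field_simp
  have H22 : M2op q f (q⁻¹ * z) =
      q * (z ^ 2 + q ^ 2) * (f z - f (q⁻¹ * (q⁻¹ * z)))
        / ((q ^ 2 - 1) * (z ^ 2 - q ^ 2)) := by
    simp only [M2op, mul_inv_cancel_left₀ hq]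
    rw [d1, d3, div_mul_div_comm, div_div_eq_mul_div, div_eq_div_iff hDB hDB]
    field_simp
  -- composite values over the common denominator D0
  have HT2 : M2op q (R2op q f) z =
      q * (z ^ 2 + 1) *
        ((q ^ 2 * (q ^ 2 * z ^ 2 + 1) * (q ^ 2 * z ^ 2 * f z - f (q * (q * z)))
            - (q ^ 2 * z ^ 2 - 1) * (q ^ 2 * z ^ 2 * f z + f (q * (q * z)))) * (z ^ 2 - q ^ 2)
          - (q ^ 2 * (z ^ 2 + q ^ 2) * (z ^ 2 * f (q⁻¹ * (q⁻¹ * z)) - q ^ 2 * f z)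
            - (z ^ 2 - q ^ 2) * (z ^ 2 * f (q⁻¹ * (q⁻¹ * z)) + q ^ 2 * f z)) * (q ^ 2 * z ^ 2 - 1))
        / ((q ^ 2 - 1) ^ 2 * (z ^ 2 - 1) * (q ^ 2 * z ^ 2 - 1) * (z ^ 2 - q ^ 2) * z) := by
    rw [M2val q hq (R2op q f) z hz hq2 hz2, Hg1, Hg2, div_sub_div _ _ hDG1 hDG2,
      mul_div_assoc', div_div,
      div_eq_div_iff (mul_ne_zero (mul_ne_zero hDG1 hDG2) hE) hD0]
    ring
  have HT1 : M1op q (R2op q f) z =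
      ((q ^ 2 * z ^ 2 + 1) *
          (q ^ 2 * (z ^ 2 + q ^ 2) * (z ^ 2 * f (q⁻¹ * (q⁻¹ * z)) - q ^ 2 * f z)
            - (z ^ 2 - q ^ 2) * (z ^ 2 * f (q⁻¹ * (q⁻¹ * z)) + q ^ 2 * f z)) * (q ^ 2 * z ^ 2 - 1)
        - (z ^ 2 + q ^ 2) *
          (q ^ 2 * (q ^ 2 * z ^ 2 + 1) * (q ^ 2 * z ^ 2 * f z - f (q * (q * z)))
            - (q ^ 2 * z ^ 2 - 1) * (q ^ 2 * z ^ 2 * f z + f (q * (q * z)))) * (z ^ 2 - q ^ 2))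
        / ((q ^ 2 - 1) ^ 2 * (z ^ 2 - 1) * (q ^ 2 * z ^ 2 - 1) * (z ^ 2 - q ^ 2) * z) := by
    rw [M1val q hq (R2op q f) z hz hq2 hz2, Hg1, Hg2, mul_div_assoc', mul_div_assoc',
      div_sub_div _ _ hDG2 hDG1, div_div,
      div_eq_div_iff (mul_ne_zero (mul_ne_zero hDG2 hDG1) hE) hD0]
    ring
  have HS2 : R2op q (M2op q f) z =
      q * (q ^ 2 * (z ^ 2 + 1) *
          (z ^ 2 * (q * (z ^ 2 + q ^ 2) * (f z - f (q⁻¹ * (q⁻¹ * z)))) * (q ^ 2 * z ^ 2 - 1)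
            - q * (q ^ 2 * z ^ 2 + 1) * (f (q * (q * z)) - f z) * (z ^ 2 - q ^ 2))
        - (z ^ 2 - 1) *
          (z ^ 2 * (q * (z ^ 2 + q ^ 2) * (f z - f (q⁻¹ * (q⁻¹ * z)))) * (q ^ 2 * z ^ 2 - 1)
            + q * (q ^ 2 * z ^ 2 + 1) * (f (q * (q * z)) - f z) * (z ^ 2 - q ^ 2)))
        / ((q ^ 2 - 1) ^ 2 * (z ^ 2 - 1) * (q ^ 2 * z ^ 2 - 1) * (z ^ 2 - q ^ 2) * z) := by
    rw [R2val q hq (M2op q f) z hz hq2 hz2, H21, H22,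
      div_eq_div_iff (mul_ne_zero hE hz) hD0]
    have eA := div_mul_cancel₀ (q * (q ^ 2 * z ^ 2 + 1) * (f (q * (q * z)) - f z)) hDA
    have eB := div_mul_cancel₀ (q * (z ^ 2 + q ^ 2) * (f z - f (q⁻¹ * (q⁻¹ * z)))) hDB
    linear_combination
      (q * (-(q ^ 2 * (z ^ 2 + 1)) - (z ^ 2 - 1))
        * ((q ^ 2 - 1) * (z ^ 2 - 1) * (z ^ 2 - q ^ 2) * z)) * eA
      + (q * z ^ 2 * (q ^ 2 * (z ^ 2 + 1) - (z ^ 2 - 1))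
        * ((q ^ 2 - 1) * (z ^ 2 - 1) * (q ^ 2 * z ^ 2 - 1) * z)) * eB
  have HS1 : R2op q (M1op q f) z =
      q * (q ^ 2 * (z ^ 2 + 1) *
          (z ^ 2 * (q ^ 2 * (z ^ 2 + 1) * f (q⁻¹ * (q⁻¹ * z)) - (z ^ 2 + q ^ 4) * f z)
              * (q ^ 2 * z ^ 2 - 1)
            - ((q ^ 4 * z ^ 2 + 1) * f z - (q ^ 2 * z ^ 2 + q ^ 2) * f (q * (q * z)))
              * (z ^ 2 - q ^ 2))
        - (z ^ 2 - 1) *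
          (z ^ 2 * (q ^ 2 * (z ^ 2 + 1) * f (q⁻¹ * (q⁻¹ * z)) - (z ^ 2 + q ^ 4) * f z)
              * (q ^ 2 * z ^ 2 - 1)
            + ((q ^ 4 * z ^ 2 + 1) * f z - (q ^ 2 * z ^ 2 + q ^ 2) * f (q * (q * z)))
              * (z ^ 2 - q ^ 2)))
        / ((q ^ 2 - 1) ^ 2 * (z ^ 2 - 1) * (q ^ 2 * z ^ 2 - 1) * (z ^ 2 - q ^ 2) * z) := by
    rw [R2val q hq (M1op q f) z hz hq2 hz2, H11, H12,
      div_eq_div_iff (mul_ne_zero hE hz) hD0]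
    have eA := div_mul_cancel₀
      ((q ^ 4 * z ^ 2 + 1) * f z - (q ^ 2 * z ^ 2 + q ^ 2) * f (q * (q * z))) hDA
    have eB := div_mul_cancel₀
      (q ^ 2 * (z ^ 2 + 1) * f (q⁻¹ * (q⁻¹ * z)) - (z ^ 2 + q ^ 4) * f z) hDB
    linear_combination
      (q * (-(q ^ 2 * (z ^ 2 + 1)) - (z ^ 2 - 1))
        * ((q ^ 2 - 1) * (z ^ 2 - 1) * (z ^ 2 - q ^ 2) * z)) * eA
      + (q * z ^ 2 * (q ^ 2 * (z ^ 2 + 1) - (z ^ 2 - 1))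
        * ((q ^ 2 - 1) * (z ^ 2 - 1) * (q ^ 2 * z ^ 2 - 1) * z)) * eB
  rw [HT2, HS2, HT1, HS1, d5, one_div_div, mul_div_assoc', div_sub_div_same,
    mul_div_assoc', mul_div_assoc', div_sub_div_same, mul_div_assoc',
    ← add_div, div_mul_div_comm, div_eq_iff (mul_ne_zero hq41 hD0)]
  field_simp
  ring
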